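/- arXiv:2305.00880 — 3 statements merged into one kernel-verified Lean document; each statement's English description precedes it below -/
import Mathlib

section
/- If p ≤ (1−ε)n/(eM) where ε > 0 is constant and M = Ω(n log n), then with high probability as n → ∞ the random graph G(n,p) contains no Hamilton cycle H with ι(H) ≤ M. -/
open Filter Topology

attribute [local instance] Classical.propDecidable

/-- Weight of an outcome `ω` (an indicator of which potential edges are present)
in the Erdős–Rényi model `G(n,p)`: each non-diagonal pair is present
independently with probability `p`; diagonal "edges" are forced absent. -/
noncomputable def erWeight (n : ℕ) (p : ℝ) (ω : Sym2 (Fin n) → Bool) : ℝ :=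
  ∏ e : Sym2 (Fin n),
    if e.IsDiag then (if ω e then 0 else 1) else (if ω e then p else 1 - p)

/-- The simple graph determined by an edge-indicator `ω`. -/
def graphOf {n : ℕ} (ω : Sym2 (Fin n) → Bool) : SimpleGraph (Fin n) :=
  SimpleGraph.fromRel (fun u v => ω s(u, v))

/-- Probability that `G(n,p)` satisfies the property `A`. -/
noncomputable def erP (n : ℕ) (p : ℝ) (A : SimpleGraph (Fin n) → Prop) : ℝ :=
  ∑ ω : Sym2 (Fin n) → Bool, erWeight n p ω * (if A (graphOf ω) then 1 else 0)

/-- `σ` lists the vertices of a Hamilton cycle of `G` in order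
(consecutive vertices, cyclically, are adjacent). -/
def IsHamSeq {n : ℕ} (G : SimpleGraph (Fin n)) (σ : Equiv.Perm (Fin n)) : Prop :=
  ∀ i : Fin n, G.Adj (σ i) (σ (finRotate n i))

/-- Number of inversions of the sequence `(σ 0, ..., σ (n-1))`. -/
def inversions {n : ℕ} (σ : Equiv.Perm (Fin n)) : ℕ :=
  (Finset.univ.filter (fun q : Fin n × Fin n => q.1 < q.2 ∧ σ q.2 < σ q.1)).card

-- ### Counting part

private def invCode {n : ℕ} (σ : Equiv.Perm (Fin n)) (i : Fin n) : ℕ :=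
  (Finset.univ.filter fun j => i < j ∧ σ j < σ i).card

private lemma sum_invCode {n : ℕ} (σ : Equiv.Perm (Fin n)) :
    ∑ i, invCode σ i = inversions σ := by
  unfold inversions invCode
  rw [Finset.card_filter, Fintype.sum_prod_type]
  refine Finset.sum_congr rfl fun i _ => ?_
  rw [Finset.card_filter]

private lemma invCode_eq {n : ℕ} (σ : Equiv.Perm (Fin n)) (i : Fin n) :
    invCode σ i
      = (Finset.univ.filter fun v : Fin n => v < σ i ∧ ∀ j : Fin n, j < i → σ j ≠ v).card := by
  refine Finset.card_bij (fun j _ => σ j) ?_ ?_ ?_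
  · intro j hj
    simp only [Finset.mem_filter, Finset.mem_univ, true_and] at hj ⊢
    exact ⟨hj.2, fun k hk h => (ne_of_lt (lt_trans hk hj.1)) (σ.injective h)⟩
  · intro a _ b _ h
    exact σ.injective h
  · intro v hv
    simp only [Finset.mem_filter, Finset.mem_univ, true_and] at hv
    refine ⟨σ.symm v, ?_, by simp⟩
    simp only [Finset.mem_filter, Finset.mem_univ, true_and, Equiv.apply_symm_apply]
    refine ⟨?_, hv.1⟩
    rcases lt_trichotomy (σ.symm v) i with h | h | h
    · exact absurd (by simp : σ (σ.symm v) = v) (hv.2 _ h)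
    · exfalso
      have hv1 := hv.1
      rw [show v = σ i from by rw [← h, Equiv.apply_symm_apply]] at hv1
      exact absurd rfl (ne_of_lt hv1)
    · exact h

private lemma invCode_injective {n : ℕ} : Function.Injective (@invCode n) := by
  intro σ τ h
  refine Equiv.ext fun i => ?_
  suffices key : ∀ m : ℕ, ∀ i : Fin n, (i : ℕ) = m → σ i = τ i from key i i rfl
  intro m
  induction m using Nat.strong_induction_on with
  | _ m ih =>
  intro i him
  have hpre : ∀ j : Fin n, j < i → σ j = τ j := fun j hj =>
    ih (j : ℕ) (him ▸ hj) j rfl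
  have hci : invCode σ i = invCode τ i := congrFun h i
  rw [invCode_eq, invCode_eq] at hci
  have hset :
      (Finset.univ.filter fun v : Fin n => v < τ i ∧ ∀ j : Fin n, j < i → τ j ≠ v)
        = (Finset.univ.filter fun v : Fin n => v < τ i ∧ ∀ j : Fin n, j < i → σ j ≠ v) := by
    refine Finset.filter_congr fun v _ => ?_
    constructor
    · rintro ⟨h1, h2⟩; exact ⟨h1, fun j hj => (hpre j hj) ▸ h2 j hj⟩
    · rintro ⟨h1, h2⟩; exact ⟨h1, fun j hj => (hpre j hj) ▸ h2 j hj⟩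
  rw [hset] at hci
  have mono : ∀ x y : Fin n, x < y → (∀ j : Fin n, j < i → σ j ≠ x) →
      (Finset.univ.filter fun v : Fin n => v < x ∧ ∀ j : Fin n, j < i → σ j ≠ v).card
        < (Finset.univ.filter fun v : Fin n => v < y ∧ ∀ j : Fin n, j < i → σ j ≠ v).card := by
    intro x y hxy hx
    apply Finset.card_lt_card
    constructor
    · intro v hv
      simp only [Finset.mem_filter, Finset.mem_univ, true_and] at hv ⊢
      exact ⟨lt_trans hv.1 hxy, hv.2⟩
    · intro hsub
      have hxmem : x ∈ Finset.univ.filter fun v : Fin n => v < y ∧ ∀ j : Fin n, j < i → σ j ≠ v := by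
        simp only [Finset.mem_filter, Finset.mem_univ, true_and]
        exact ⟨hxy, hx⟩
      have := hsub hxmem
      simp only [Finset.mem_filter, Finset.mem_univ, true_and] at this
      exact absurd rfl (ne_of_lt this.1)
  rcases lt_trichotomy (σ i) (τ i) with hlt | heq | hgt
  · exact absurd hci (ne_of_lt (mono _ _ hlt
      (fun j hj hc => (ne_of_lt hj) (σ.injective hc))))
  · exact heq
  · exact absurd hci.symm (ne_of_lt (mono _ _ hgt
      (fun j hj hc => (ne_of_lt hj) (by rw [hpre j hj] at hc; exact τ.injective hc))))

private lemma multiset_card_finset_sum {α β : Type*} (s : Finset β) (f : β → Multiset α) :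
    Multiset.card (∑ i ∈ s, f i) = ∑ i ∈ s, Multiset.card (f i) := by
  classical
  induction s using Finset.induction with
  | empty => simp
  | insert _ _ hnot ih => simp [Finset.sum_insert hnot, ih]

private lemma card_small_inversions_le (n Mn : ℕ) :
    ((Finset.univ : Finset (Equiv.Perm (Fin n))).filter fun σ => inversions σ ≤ Mn).card
      ≤ (Mn + n).choose n := by
  classical
  have hcard : Fintype.card (Sym (Fin (n + 1)) Mn) = (Mn + n).choose n := by
    rw [Sym.card_sym_eq_multichoose, Fintype.card_fin, Nat.multichoose_eq,
      show n + 1 + Mn - 1 = Mn + n by omega]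
    exact Nat.choose_symm_add
  set m : Equiv.Perm (Fin n) → Multiset (Fin (n + 1)) := fun σ =>
    (∑ i : Fin n, invCode σ i • ({(i.castSucc)} : Multiset (Fin (n + 1))))
      + (Mn - inversions σ) • ({Fin.last n} : Multiset (Fin (n + 1))) with hm
  have hcount : ∀ σ (i : Fin n), Multiset.count i.castSucc (m σ) = invCode σ i := by
    intro σ i
    rw [hm]
    simp only [Multiset.count_add, Multiset.count_sum', Multiset.count_nsmul,
      Multiset.count_singleton]
    rw [if_neg (Fin.ne_last_of_lt (Fin.castSucc_lt_last i)), mul_zero, add_zero]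
    rw [Finset.sum_eq_single i]
    · simp
    · intro j _ hji
      rw [if_neg (by simpa [Fin.castSucc_inj] using (Ne.symm hji)), mul_zero]
    · intro hni; exact absurd (Finset.mem_univ i) hni
  have hmcard : ∀ σ, inversions σ ≤ Mn → Multiset.card (m σ) = Mn := by
    intro σ hσ
    have hcm : Multiset.card (m σ) = (∑ i : Fin n, invCode σ i) + (Mn - inversions σ) := by
      rw [hm]
      rw [Multiset.card_add, multiset_card_finset_sum]
      simp [Multiset.card_nsmul]
    rw [hcm, sum_invCode]
    omega
  set F : Equiv.Perm (Fin n) → Sym (Fin (n + 1)) Mn := fun σ =>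
    if h : inversions σ ≤ Mn then (⟨m σ, hmcard σ h⟩ : Sym (Fin (n + 1)) Mn)
    else Sym.replicate Mn 0 with hF
  have main : ((Finset.univ : Finset (Equiv.Perm (Fin n))).filter fun σ =>
      inversions σ ≤ Mn).card ≤ (Finset.univ : Finset (Sym (Fin (n + 1)) Mn)).card := by
    apply Finset.card_le_card_of_injOn F
    · intro σ _; exact Finset.mem_univ _
    · intro σ hσ τ hτ hst
      simp only [Finset.mem_coe, Finset.mem_filter] at hσ hτ
      simp only [hF, dif_pos hσ.2, dif_pos hτ.2] at hst
      have hm' : m σ = m τ := by simpa [hσ.2, hτ.2] using congrArg Subtype.val hst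
      apply invCode_injective
      funext i
      rw [← hcount σ i, ← hcount τ i, hm']
  rwa [Finset.card_univ, hcard] at main

-- ### Probability part

private lemma erWeight_nonneg {n : ℕ} {p : ℝ} (h0 : 0 ≤ p) (h1 : p ≤ 1)
    (ω : Sym2 (Fin n) → Bool) : 0 ≤ erWeight n p ω := by
  unfold erWeight
  refine Finset.prod_nonneg fun e _ => ?_
  split_ifs <;> linarith

private lemma sum_erWeight_cond {n : ℕ} {p : ℝ} (h0 : 0 ≤ p) (h1 : p ≤ 1)
    (E : Finset (Sym2 (Fin n))) (hE : ∀ e ∈ E, ¬ e.IsDiag) :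
    ∑ ω : Sym2 (Fin n) → Bool,
        erWeight n p ω * (if ∀ e ∈ E, ω e = true then 1 else 0) = p ^ E.card := by
  classical
  set g : Sym2 (Fin n) → Bool → ℝ := fun e b =>
    (if e.IsDiag then (if b then (0:ℝ) else 1) else (if b then p else 1 - p)) *
      (if e ∈ E → b = true then 1 else 0) with hg
  have hrw : ∀ ω : Sym2 (Fin n) → Bool,
      erWeight n p ω * (if ∀ e ∈ E, ω e = true then 1 else 0)
        = ∏ e : Sym2 (Fin n), g e (ω e) := by
    intro ω
    rw [hg]
    rw [Finset.prod_mul_distrib]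
    congr 1
    by_cases hA : ∀ e ∈ E, ω e = true
    · rw [if_pos hA]
      exact (Finset.prod_eq_one fun e _ => if_pos fun he => hA e he).symm
    · rw [if_neg hA]
      push_neg at hA
      obtain ⟨e, he, hne⟩ := hA
      refine (Finset.prod_eq_zero (Finset.mem_univ e) ?_).symm
      exact if_neg fun hc => hne (hc he)
  calc (∑ ω : Sym2 (Fin n) → Bool,
          erWeight n p ω * (if ∀ e ∈ E, ω e = true then 1 else 0))
      = ∑ ω ∈ Fintype.piFinset (fun _ : Sym2 (Fin n) => (Finset.univ : Finset Bool)),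
          ∏ e : Sym2 (Fin n), g e (ω e) := by
        rw [Fintype.piFinset_univ]
        exact Finset.sum_congr rfl fun ω _ => hrw ω
    _ = ∏ e : Sym2 (Fin n), ∑ b : Bool, g e b := (Finset.prod_univ_sum _ _).symm
    _ = ∏ e : Sym2 (Fin n), (if e ∈ E then p else 1) := by
        refine Finset.prod_congr rfl fun e _ => ?_
        rw [Fintype.sum_bool]
        by_cases he : e ∈ E
        · have hd := hE e he
          simp [hg, he, hd]
        · by_cases hd : e.IsDiag
          · simp [hg, he, hd]
          · simp only [hg, he, hd, if_false, if_true, IsEmpty.forall_iff, mul_one]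
            norm_num
    _ = p ^ E.card := by
        rw [Finset.prod_ite_mem, Finset.univ_inter, Finset.prod_const]

private lemma finRotate_ne {n : ℕ} (hn : 2 ≤ n) (i : Fin n) : finRotate n i ≠ i := by
  obtain ⟨m, rfl⟩ : ∃ m, n = m + 1 := ⟨n - 1, by omega⟩
  rw [finRotate_succ_apply]
  intro h
  have hv := congrArg Fin.val h
  rw [Fin.val_add_one] at hv
  split_ifs at hv with hl
  · have : (i : ℕ) = m := by rw [hl]; rfl
    omega
  · omega

private lemma edge_not_diag {n : ℕ} (hn : 2 ≤ n) (σ : Equiv.Perm (Fin n)) (i : Fin n) :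
    ¬ (s(σ i, σ (finRotate n i))).IsDiag := by
  rw [Sym2.mk_isDiag_iff]
  intro h
  exact finRotate_ne hn i (σ.injective h.symm)

private lemma edge_inj {n : ℕ} (hn : 3 ≤ n) (σ : Equiv.Perm (Fin n)) :
    Function.Injective fun i : Fin n => s(σ i, σ (finRotate n i)) := by
  obtain ⟨m, rfl⟩ : ∃ m, n = m + 1 := ⟨n - 1, by omega⟩
  intro i j h
  simp only [finRotate_succ_apply, Sym2.eq_iff] at h
  rcases h with ⟨h1, _⟩ | ⟨h1, h2⟩
  · exact σ.injective h1
  · exfalso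
    have e1 : i = j + 1 := σ.injective h1
    have e2 : i + 1 = j := σ.injective h2
    have v1 := congrArg Fin.val e1
    have v2 := congrArg Fin.val e2
    rw [Fin.val_add_one] at v1 v2
    have hi : (i : ℕ) < m + 1 := i.isLt
    have hj : (j : ℕ) < m + 1 := j.isLt
    split_ifs at v1 v2 with hl1 hl2 hl2
    · have : (j : ℕ) = m := by rw [hl1]; rfl
      have : (i : ℕ) = m := by rw [hl2]; rfl
      omega
    · have : (j : ℕ) = m := by rw [hl1]; rfl
      omega
    · have : (i : ℕ) = m := by rw [hl2]; rfl
      omega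
    · omega

set_option maxHeartbeats 2000000 in
private lemma erP_le_card_mul {n Mn : ℕ} {p : ℝ} (h0 : 0 ≤ p) (h1 : p ≤ 1) (hn : 3 ≤ n) :
    erP n p (fun G => ∃ σ : Equiv.Perm (Fin n),
        (∀ i : Fin n, (i : ℕ) = 0 → (σ i : ℕ) = 0) ∧ IsHamSeq G σ ∧ inversions σ ≤ Mn)
      ≤ ((Mn + n).choose n : ℝ) * p ^ n := by
  classical
  set S : Finset (Equiv.Perm (Fin n)) :=
    Finset.univ.filter (fun σ : Equiv.Perm (Fin n) => inversions σ ≤ Mn) with hS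
  have hind : ∀ ω : Sym2 (Fin n) → Bool,
      (@ite ℝ (∃ σ : Equiv.Perm (Fin n),
          (∀ i : Fin n, (i : ℕ) = 0 → (σ i : ℕ) = 0) ∧ IsHamSeq (graphOf ω) σ ∧
            inversions σ ≤ Mn) (Classical.propDecidable _) (1:ℝ) 0)
        ≤ ∑ σ ∈ S, (if IsHamSeq (graphOf ω) σ then (1:ℝ) else 0) := by
    intro ω
    split_ifs with hA
    · obtain ⟨σ, _, hham, hinv⟩ := hA
      have hmem : σ ∈ S := by rw [hS]; simp [hinv]
      calc (1:ℝ) = (if IsHamSeq (graphOf ω) σ then (1:ℝ) else 0) := by rw [if_pos hham]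
        _ ≤ _ := Finset.single_le_sum (f := fun τ => if IsHamSeq (graphOf ω) τ then (1:ℝ) else 0)
            (fun τ _ => by split_ifs <;> norm_num) hmem
    · exact Finset.sum_nonneg fun τ _ => by split_ifs <;> norm_num
  have step1 : erP n p (fun G => ∃ σ : Equiv.Perm (Fin n),
        (∀ i : Fin n, (i : ℕ) = 0 → (σ i : ℕ) = 0) ∧ IsHamSeq G σ ∧ inversions σ ≤ Mn)
      ≤ ∑ σ ∈ S, ∑ ω : Sym2 (Fin n) → Bool,
          erWeight n p ω * (if IsHamSeq (graphOf ω) σ then 1 else 0) := by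
    rw [erP]
    refine le_trans (Finset.sum_le_sum fun ω _ =>
      mul_le_mul_of_nonneg_left (hind ω) (erWeight_nonneg h0 h1 ω)) ?_
    simp only [Finset.mul_sum]
    exact le_of_eq Finset.sum_comm
  have step2 : ∀ σ : Equiv.Perm (Fin n),
      ∑ ω : Sym2 (Fin n) → Bool, erWeight n p ω * (if IsHamSeq (graphOf ω) σ then 1 else 0)
        ≤ p ^ n := by
    intro σ
    set E : Finset (Sym2 (Fin n)) :=
      Finset.univ.image (fun i : Fin n => s(σ i, σ (finRotate n i))) with hEdef
    have hcard : E.card = n := by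
      rw [hEdef, Finset.card_image_of_injective _ (edge_inj hn σ), Finset.card_univ,
        Fintype.card_fin]
    have hdiag : ∀ e ∈ E, ¬ e.IsDiag := by
      intro e he
      rw [hEdef] at he
      obtain ⟨i, _, rfl⟩ := Finset.mem_image.mp he
      exact edge_not_diag (by omega) σ i
    have hmono : ∀ ω : Sym2 (Fin n) → Bool, IsHamSeq (graphOf ω) σ → ∀ e ∈ E, ω e = true := by
      intro ω hham e he
      rw [hEdef] at he
      obtain ⟨i, _, rfl⟩ := Finset.mem_image.mp he
      have := hham i
      rw [graphOf, SimpleGraph.fromRel_adj] at this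
      rcases this.2 with h | h
      · exact h
      · rwa [Sym2.eq_swap] at h
    calc ∑ ω : Sym2 (Fin n) → Bool, erWeight n p ω * (if IsHamSeq (graphOf ω) σ then 1 else 0)
        ≤ ∑ ω : Sym2 (Fin n) → Bool,
            erWeight n p ω * (if ∀ e ∈ E, ω e = true then 1 else 0) := by
          refine Finset.sum_le_sum fun ω _ => ?_
          refine mul_le_mul_of_nonneg_left ?_ (erWeight_nonneg h0 h1 ω)
          split_ifs with ha hb
          · exact le_rfl
          · exact absurd (hmono ω ha) hb
          · norm_num
          · exact le_rfl
      _ = p ^ E.card := sum_erWeight_cond h0 h1 E hdiag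
      _ = p ^ n := by rw [hcard]
  calc erP n p _ ≤ ∑ σ ∈ S, ∑ ω : Sym2 (Fin n) → Bool,
          erWeight n p ω * (if IsHamSeq (graphOf ω) σ then 1 else 0) := step1
    _ ≤ ∑ _σ ∈ S, p ^ n := Finset.sum_le_sum fun σ _ => step2 σ
    _ = (S.card : ℝ) * p ^ n := by rw [Finset.sum_const, nsmul_eq_mul]
    _ ≤ ((Mn + n).choose n : ℝ) * p ^ n := by
        refine mul_le_mul_of_nonneg_right ?_ (pow_nonneg h0 n)
        exact_mod_cast card_small_inversions_le n Mn

private lemma choose_mul_pow_le (δ : ℝ) (hδ0 : 0 ≤ δ) (n Mn : ℕ) (hn : 1 ≤ n) (hM : 1 ≤ Mn)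
    (p : ℝ) (hp0 : 0 ≤ p) (hp : p ≤ δ * n / (Real.exp 1 * Mn)) :
    ((Mn + n).choose n : ℝ) * p ^ n ≤ (δ * ((Mn : ℝ) + n) / Mn) ^ n := by
  have hnR : (0:ℝ) < n := by exact_mod_cast hn
  have hMR : (0:ℝ) < Mn := by exact_mod_cast hM
  have he : (0:ℝ) < Real.exp 1 := Real.exp_pos 1
  have hfac : (0:ℝ) < (n.factorial : ℝ) := by exact_mod_cast n.factorial_pos
  have hstir : ((n:ℝ)) ^ n ≤ Real.exp 1 ^ n * n.factorial := by
    have h := Real.pow_div_factorial_le_exp (x := (n:ℝ)) (by positivity) n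
    rw [div_le_iff₀ hfac] at h
    rw [Real.exp_one_pow]
    exact h
  have h1 : ((Mn + n).choose n : ℝ) ≤ (Real.exp 1 * ((Mn:ℝ) + n) / n) ^ n := by
    calc ((Mn + n).choose n : ℝ)
        ≤ (((Mn + n : ℕ)) : ℝ) ^ n / n.factorial := Nat.choose_le_pow_div n (Mn + n)
      _ = ((Mn:ℝ) + n) ^ n / n.factorial := by push_cast; ring
      _ ≤ (Real.exp 1 * ((Mn:ℝ) + n) / n) ^ n := by
          rw [div_pow, mul_pow, div_le_div_iff₀ hfac (by positivity)]
          calc ((Mn:ℝ)+n)^n * (n:ℝ)^n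
              ≤ ((Mn:ℝ)+n)^n * (Real.exp 1 ^ n * n.factorial) :=
                mul_le_mul_of_nonneg_left hstir (by positivity)
            _ = Real.exp 1 ^ n * ((Mn:ℝ)+n)^n * n.factorial := by ring
  have h2 : p ^ n ≤ (δ * n / (Real.exp 1 * Mn)) ^ n := pow_le_pow_left₀ hp0 hp n
  calc ((Mn + n).choose n : ℝ) * p ^ n
      ≤ (Real.exp 1 * ((Mn:ℝ) + n) / n) ^ n * (δ * n / (Real.exp 1 * Mn)) ^ n :=
        mul_le_mul h1 h2 (by positivity) (by positivity)
    _ = ((Real.exp 1 * ((Mn:ℝ) + n) / n) * (δ * n / (Real.exp 1 * Mn))) ^ n :=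
        (mul_pow _ _ n).symm
    _ = (δ * ((Mn:ℝ) + n) / Mn) ^ n := by
        congr 1
        field_simp

/-- If `p ≤ (1-ε) n /(e M)` with `ε > 0` constant and `M = Ω(n log n)`, then
w.h.p. `G(n,p)` has no Hamilton cycle `H` (anchored to start at the first
vertex) with `ι(H) ≤ M`. -/
theorem stmt_3 (ε : ℝ) (hε : 0 < ε) (M : ℕ → ℕ) (p : ℕ → ℝ)
    (hM : ∃ c : ℝ, 0 < c ∧ ∀ᶠ n : ℕ in atTop, c * n * Real.log n ≤ M n)
    (hp0 : ∀ n, 0 ≤ p n)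
    (hp : ∀ᶠ n : ℕ in atTop, p n ≤ (1 - ε) * n / (Real.exp 1 * M n)) :
    Tendsto (fun n => erP n (p n) (fun G => ∃ σ : Equiv.Perm (Fin n),
        (∀ i : Fin n, (i : ℕ) = 0 → (σ i : ℕ) = 0) ∧
        IsHamSeq G σ ∧ inversions σ ≤ M n))
      atTop (𝓝 0) := by
  classical
  obtain ⟨c, hc, hMc⟩ := hM
  set ε' : ℝ := min ε (1/2) with hε'def
  have hε'0 : 0 < ε' := lt_min hε (by norm_num)
  have hε'le : ε' ≤ 1/2 := min_le_right _ _
  have h1ε' : (0:ℝ) < 1 - ε' := by linarith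
  set d : ℝ := (ε'/2) / (1 - ε') with hd_def
  have hd0 : 0 < d := by positivity
  have hd1 : d ≤ 1 := by rw [hd_def, div_le_one h1ε']; linarith
  set r : ℝ := 1 - ε'/2 with hr_def
  have hr0 : 0 ≤ r := by rw [hr_def]; linarith
  have hr1 : r < 1 := by rw [hr_def]; linarith
  have hlog : Tendsto (fun n : ℕ => c * Real.log n) atTop atTop :=
    (Real.tendsto_log_atTop.comp tendsto_natCast_atTop_atTop).const_mul_atTop hc
  have hinv : Tendsto (fun n : ℕ => (c * Real.log n)⁻¹) atTop (𝓝 0) :=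
    hlog.inv_tendsto_atTop
  have hev1 : ∀ᶠ n : ℕ in atTop, (c * Real.log n)⁻¹ < d := hinv.eventually_lt_const hd0
  have hev : ∀ᶠ n : ℕ in atTop,
      0 ≤ erP n (p n) (fun G => ∃ σ : Equiv.Perm (Fin n),
        (∀ i : Fin n, (i : ℕ) = 0 → (σ i : ℕ) = 0) ∧ IsHamSeq G σ ∧ inversions σ ≤ M n) ∧
      erP n (p n) (fun G => ∃ σ : Equiv.Perm (Fin n),
        (∀ i : Fin n, (i : ℕ) = 0 → (σ i : ℕ) = 0) ∧ IsHamSeq G σ ∧ inversions σ ≤ M n)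
        ≤ r ^ n := by
    filter_upwards [hMc, hp, hev1, eventually_ge_atTop 3] with n hMn hpn hdn hn3
    have hnR : (3:ℝ) ≤ (n:ℝ) := by exact_mod_cast hn3
    have hn1 : (1:ℝ) < (n:ℝ) := by linarith
    have hlogpos : 0 < Real.log n := Real.log_pos hn1
    have hclog : 0 < c * Real.log n := by positivity
    have hMpos : (0:ℝ) < M n := by
      refine lt_of_lt_of_le ?_ hMn
      have : (0:ℝ) < (n:ℝ) := by linarith
      positivity
    have hM1 : 1 ≤ M n := by
      have := Nat.cast_pos (α := ℝ).mp hMpos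
      omega
    have hexp : (1:ℝ) ≤ Real.exp 1 := by
      have := Real.exp_le_exp.mpr (by norm_num : (0:ℝ) ≤ 1)
      rwa [Real.exp_zero] at this
    have hnM : (n:ℝ) / M n ≤ (c * Real.log n)⁻¹ := by
      rw [inv_eq_one_div, div_le_div_iff₀ hMpos hclog]
      nlinarith [hMn]
    have hnMd : (n:ℝ)/M n ≤ d := hnM.trans (le_of_lt hdn)
    have hεε' : (1 - ε) ≤ (1 - ε') := by
      have := min_le_left ε (1/2)
      rw [hε'def]
      linarith [min_le_left ε (1/2)]
    have hp' : p n ≤ (1 - ε') * n / (Real.exp 1 * M n) := by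
      refine hpn.trans ?_
      refine (div_le_div_iff_of_pos_right (by positivity)).mpr ?_
      exact mul_le_mul_of_nonneg_right hεε' (by positivity)
    have hp1 : p n ≤ 1 := by
      have h2 : (1 - ε') * n / (Real.exp 1 * M n) ≤ (n:ℝ)/M n := by
        rw [div_le_div_iff₀ (by positivity) hMpos]
        nlinarith [mul_nonneg (le_of_lt hMpos) (by linarith : (0:ℝ) ≤ (n:ℝ))]
      exact hp'.trans (h2.trans (hnMd.trans hd1))
    constructor
    · rw [erP]
      refine Finset.sum_nonneg fun ω _ => mul_nonneg (erWeight_nonneg (hp0 n) hp1 ω) ?_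
      split_ifs <;> norm_num
    · have hb := erP_le_card_mul (Mn := M n) (hp0 n) hp1 hn3
      have hcb := choose_mul_pow_le (1-ε') (le_of_lt h1ε') n (M n) (by omega) hM1 (p n)
        (hp0 n) hp'
      have hbase : (1 - ε') * ((M n : ℝ) + n) / M n ≤ r := by
        have hsplit : (1 - ε') * ((M n : ℝ) + n) / M n = (1 - ε') * (1 + (n:ℝ)/M n) := by
          field_simp
        rw [hsplit]
        have hd_eq : (1-ε') * d = ε'/2 := by
          rw [hd_def, mul_div_assoc']
          rw [mul_comm, mul_div_assoc, div_self (ne_of_gt h1ε'), mul_one]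
        have step : (1-ε') * (1 + (n:ℝ)/M n) ≤ (1-ε') * (1 + d) :=
          mul_le_mul_of_nonneg_left (by linarith) (le_of_lt h1ε')
        refine step.trans ?_
        rw [hr_def]
        nlinarith [hd_eq]
      have hpow : ((1 - ε') * ((M n : ℝ) + n) / M n) ^ n ≤ r ^ n :=
        pow_le_pow_left₀ (by positivity) hbase n
      exact hb.trans (hcb.trans hpow)
  refine squeeze_zero' (hev.mono fun n h => h.1) (hev.mono fun n h => h.2)
    (tendsto_pow_atTop_nhds_zero_of_lt_one hr0 hr1)
end

section
/- In G(n,p) with p ≤ 5 log n / n, with high probability every vertex subset S with |S| ≤ 5n/(log n · log log n) induces at most 7|S| log n / log log n edges. -/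
open Filter Topology

attribute [local instance] Classical.propDecidable

/-- The number of edges of `G` induced by the vertex set `S`. -/
noncomputable def edgesIn {n : ℕ} (G : SimpleGraph (Fin n)) (S : Finset (Fin n)) : ℕ :=
  (Finset.univ.filter
    (fun e : Sym2 (Fin n) => e ∈ G.edgeSet ∧ ∀ v ∈ e, v ∈ S)).card

namespace ErAux

noncomputable def w (n : ℕ) (p : ℝ) (e : Sym2 (Fin n)) (b : Bool) : ℝ :=
  if e.IsDiag then (if b then 0 else 1) else (if b then p else 1 - p)

lemma erWeight_eq (n : ℕ) (p : ℝ) (ω : Sym2 (Fin n) → Bool) :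
    erWeight n p ω = ∏ e, w n p e (ω e) := rfl

variable {n : ℕ} {p : ℝ}

lemma w_nonneg (hp0 : 0 ≤ p) (hp1 : p ≤ 1) (e : Sym2 (Fin n)) (b : Bool) :
    0 ≤ w n p e b := by
  unfold w; split_ifs <;> linarith

lemma erWeight_nonneg (hp0 : 0 ≤ p) (hp1 : p ≤ 1) (ω : Sym2 (Fin n) → Bool) :
    0 ≤ erWeight n p ω :=
  Finset.prod_nonneg fun e _ => w_nonneg hp0 hp1 e _

lemma sum_mul_prod (f : Sym2 (Fin n) → Bool → ℝ) :
    ∑ ω : Sym2 (Fin n) → Bool, ∏ e, f e (ω e) = ∏ e, (f e true + f e false) := by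
  calc ∑ ω : Sym2 (Fin n) → Bool, ∏ e, f e (ω e)
      = ∏ e, ∑ b, f e b := (Fintype.prod_sum f).symm
    _ = ∏ e, (f e true + f e false) := by
        refine Finset.prod_congr rfl fun e _ => ?_
        simp [Fintype.sum_bool]

lemma sum_erWeight (hp0 : 0 ≤ p) (hp1 : p ≤ 1) :
    ∑ ω : Sym2 (Fin n) → Bool, erWeight n p ω = 1 := by
  simp only [erWeight_eq]
  rw [sum_mul_prod (w n p)]
  rw [Finset.prod_eq_one]
  intro e _
  by_cases h : e.IsDiag <;> simp [w, h] <;> ring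



lemma erP_nonneg (hp0 : 0 ≤ p) (hp1 : p ≤ 1) (A : SimpleGraph (Fin n) → Prop) :
    0 ≤ erP n p A := by
  refine Finset.sum_nonneg fun ω _ => mul_nonneg (erWeight_nonneg hp0 hp1 ω) ?_
  split_ifs <;> norm_num

lemma erP_mono (hp0 : 0 ≤ p) (hp1 : p ≤ 1) {A B : SimpleGraph (Fin n) → Prop}
    (h : ∀ G, A G → B G) : erP n p A ≤ erP n p B := by
  refine Finset.sum_le_sum fun ω _ => mul_le_mul_of_nonneg_left ?_ (erWeight_nonneg hp0 hp1 ω)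
  split_ifs with h1 h2
  · exact le_refl _
  · exact absurd (h _ h1) h2
  · norm_num
  · exact le_refl _

lemma erP_of_false (hp0 : 0 ≤ p) (hp1 : p ≤ 1) {A : SimpleGraph (Fin n) → Prop}
    (h : ∀ G, ¬ A G) : erP n p A = 0 := by
  unfold erP
  refine Finset.sum_eq_zero fun ω _ => ?_
  rw [if_neg (h _), mul_zero]

lemma erP_add_compl (hp0 : 0 ≤ p) (hp1 : p ≤ 1) (A : SimpleGraph (Fin n) → Prop) :
    erP n p A + erP n p (fun G => ¬ A G) = 1 := by
  have h2 : ∀ ω : Sym2 (Fin n) → Bool,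
      erWeight n p ω * (if A (graphOf ω) then (1:ℝ) else 0)
        + erWeight n p ω * (if ¬ A (graphOf ω) then (1:ℝ) else 0) = erWeight n p ω := by
    intro ω; by_cases h : A (graphOf ω) <;> simp [h]
  unfold erP
  rw [← Finset.sum_add_distrib]
  refine Eq.trans (Finset.sum_congr rfl fun ω _ => ?_) (sum_erWeight hp0 hp1)
  by_cases h : A (graphOf ω) <;> simp [h]

lemma erP_union_bound {ι : Type*} (hp0 : 0 ≤ p) (hp1 : p ≤ 1) (I : Finset ι)
    (A : ι → SimpleGraph (Fin n) → Prop) :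
    erP n p (fun G => ∃ i ∈ I, A i G) ≤ ∑ i ∈ I, erP n p (A i) := by
  unfold erP
  rw [show (∑ i ∈ I, ∑ ω : Sym2 (Fin n) → Bool,
      erWeight n p ω * (if A i (graphOf ω) then (1:ℝ) else 0))
    = ∑ ω : Sym2 (Fin n) → Bool, ∑ i ∈ I,
      erWeight n p ω * (if A i (graphOf ω) then (1:ℝ) else 0) from Finset.sum_comm]
  refine Finset.sum_le_sum fun ω _ => ?_
  rw [← Finset.mul_sum]
  refine mul_le_mul_of_nonneg_left ?_ (erWeight_nonneg hp0 hp1 ω)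
  split_ifs with h1
  · obtain ⟨i, hi, hAi⟩ := h1
    calc (1:ℝ) = if A i (graphOf ω) then (1:ℝ) else 0 := by rw [if_pos hAi]
      _ ≤ ∑ j ∈ I, (if A j (graphOf ω) then (1:ℝ) else 0) := by
          exact Finset.single_le_sum
            (f := fun j => if A j (graphOf ω) then (1:ℝ) else 0)
            (fun j _ => by split_ifs <;> norm_num) hi
  · refine Finset.sum_nonneg fun j _ => ?_
    split_ifs <;> norm_num

lemma mem_edgeSet_graphOf {ω : Sym2 (Fin n) → Bool} {e : Sym2 (Fin n)} (he : ¬ e.IsDiag) :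
    e ∈ (graphOf ω).edgeSet ↔ ω e = true := by
  induction e using Sym2.inductionOn with
  | hf u v =>
    rw [Sym2.mk_isDiag_iff] at he
    simp only [SimpleGraph.mem_edgeSet, graphOf, SimpleGraph.fromRel_adj]
    rw [Sym2.eq_swap (a := v)]
    simp [he]

lemma erP_all_edges (hp0 : 0 ≤ p) (hp1 : p ≤ 1) (T : Finset (Sym2 (Fin n)))
    (hT : ∀ e ∈ T, ¬ e.IsDiag) :
    erP n p (fun G => ∀ e ∈ T, e ∈ G.edgeSet) ≤ p ^ T.card := by
  classical
  set g : Sym2 (Fin n) → Bool → ℝ :=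
    fun e b => if e ∈ T then (if b then 1 else 0) else 1 with hg
  have step1 : erP n p (fun G => ∀ e ∈ T, e ∈ G.edgeSet)
      ≤ ∑ ω : Sym2 (Fin n) → Bool, ∏ e, (w n p e (ω e) * g e (ω e)) := by
    unfold erP
    refine Finset.sum_le_sum fun ω _ => ?_
    rw [Finset.prod_mul_distrib, ← erWeight_eq]
    by_cases hA : ∀ e ∈ T, e ∈ (graphOf ω).edgeSet
    · rw [if_pos hA, mul_one]
      have : ∏ e, g e (ω e) = 1 := by
        refine Finset.prod_eq_one fun e _ => ?_
        by_cases heT : e ∈ T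
        · have := (mem_edgeSet_graphOf (hT e heT)).mp (hA e heT)
          simp [hg, heT, this]
        · simp [hg, heT]
      rw [this, mul_one]
    · rw [if_neg hA, mul_zero]
      refine mul_nonneg (erWeight_nonneg hp0 hp1 ω) (Finset.prod_nonneg fun e _ => ?_)
      simp only [hg]
      split_ifs <;> norm_num
  have step2 : ∑ ω : Sym2 (Fin n) → Bool, ∏ e, (w n p e (ω e) * g e (ω e))
      = ∏ e : Sym2 (Fin n), (if e ∈ T then p else 1) := by
    rw [sum_mul_prod (fun e b => w n p e b * g e b)]
    refine Finset.prod_congr rfl fun e _ => ?_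
    by_cases heT : e ∈ T
    · have hnd : ¬ e.IsDiag := hT e heT
      simp [hg, heT, w, hnd]
    · have : w n p e true + w n p e false = 1 := by
        by_cases h : e.IsDiag <;> simp [w, h] <;> ring
      simp only [hg, heT, if_false, mul_one]
      rw [this]
  have step3 : ∏ e : Sym2 (Fin n), (if e ∈ T then p else 1) = p ^ T.card := by
    rw [Finset.prod_ite_mem Finset.univ T (fun _ => p)]
    simp
  rw [step3] at step2
  exact step1.trans_eq step2

/-- candidate non-diagonal pairs inside `S` -/
noncomputable def pairs (n : ℕ) (S : Finset (Fin n)) : Finset (Sym2 (Fin n)) :=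
  Finset.univ.filter (fun e : Sym2 (Fin n) => ¬ e.IsDiag ∧ ∀ v ∈ e, v ∈ S)

lemma pairs_not_isDiag {S : Finset (Fin n)} {e : Sym2 (Fin n)} (he : e ∈ pairs n S) :
    ¬ e.IsDiag := ((Finset.mem_filter.mp he).2).1

lemma card_pairs_le (S : Finset (Fin n)) : (pairs n S).card ≤ S.card ^ 2 := by
  have hsub : pairs n S ⊆ (S ×ˢ S).image (fun x : Fin n × Fin n => s(x.1, x.2)) := by
    intro e he
    obtain ⟨_, hnd, hmem⟩ := Finset.mem_filter.mp he
    induction e using Sym2.inductionOn with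
    | hf u v =>
      refine Finset.mem_image.mpr ⟨(u, v), ?_, rfl⟩
      exact Finset.mem_product.mpr ⟨hmem u (Sym2.mem_mk_left u v), hmem v (Sym2.mem_mk_right u v)⟩
  calc (pairs n S).card ≤ ((S ×ˢ S).image (fun x : Fin n × Fin n => s(x.1, x.2))).card :=
        Finset.card_le_card hsub
    _ ≤ (S ×ˢ S).card := Finset.card_image_le
    _ = S.card ^ 2 := by rw [Finset.card_product, sq]

lemma exists_subset_of_le_edgesIn {G : SimpleGraph (Fin n)} {S : Finset (Fin n)} {k : ℕ}
    (h : k ≤ edgesIn G S) :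
    ∃ T ∈ (pairs n S).powersetCard k, ∀ e ∈ T, e ∈ G.edgeSet := by
  classical
  set F := Finset.univ.filter
    (fun e : Sym2 (Fin n) => e ∈ G.edgeSet ∧ ∀ v ∈ e, v ∈ S) with hF
  have hFsub : F ⊆ pairs n S := by
    intro e he
    obtain ⟨_, hmem, hallS⟩ := Finset.mem_filter.mp he
    exact Finset.mem_filter.mpr ⟨Finset.mem_univ e,
      G.not_isDiag_of_mem_edgeSet hmem, hallS⟩
  have hcard : k ≤ F.card := h
  obtain ⟨T, hTF, hTcard⟩ := Finset.exists_subset_card_eq hcard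
  refine ⟨T, Finset.mem_powersetCard.mpr ⟨hTF.trans hFsub, hTcard⟩, fun e he => ?_⟩
  exact ((Finset.mem_filter.mp (hTF he)).2).1

lemma edgesIn_empty (G : SimpleGraph (Fin n)) : edgesIn G (∅ : Finset (Fin n)) = 0 := by
  unfold edgesIn
  rw [Finset.card_eq_zero]
  refine Finset.filter_eq_empty_iff.mpr fun e _ => ?_
  rintro ⟨_, hmem⟩
  induction e using Sym2.inductionOn with
  | hf u v => exact absurd (hmem u (Sym2.mem_mk_left u v)) (Finset.notMem_empty u)

set_option maxHeartbeats 1000000 in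
lemma calc_bound (n s m k : ℕ) (p : ℝ) (hp0 : 0 ≤ p)
    (hLL21 : 21 ≤ Real.log (Real.log n))
    (hp : p ≤ 5 * Real.log n / n)
    (hs1 : 1 ≤ s) (hs : (s:ℝ) ≤ 5 * n / (Real.log n * Real.log (Real.log n)))
    (hm : (m:ℝ) ≤ (s:ℝ)^2)
    (hk : 7 * s * Real.log n / Real.log (Real.log n) ≤ (k:ℝ)) :
    (m.choose k : ℝ) * p ^ k ≤ ((n:ℝ)⁻¹)^2 * (((n:ℝ)⁻¹)^3)^s := by
  set L := Real.log n with hLdef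
  set LL := Real.log L with hLLdef
  have hL0 : 0 ≤ L := Real.log_natCast_nonneg n
  have hL1 : 1 ≤ L := by
    by_contra h
    push_neg at h
    have := Real.log_nonpos hL0 h.le
    rw [← hLLdef] at this
    linarith
  have hLL0 : (0:ℝ) < LL := by linarith
  have hn0 : (0:ℝ) < n := by
    rcases Nat.eq_zero_or_pos n with h | h
    · subst h; simp only [Nat.cast_zero, Real.log_zero] at hLdef; rw [hLdef] at hL1; norm_num at hL1
    · exact_mod_cast h
  have hexp : Real.exp L = n := Real.exp_log hn0
  have hs1' : (1:ℝ) ≤ (s:ℝ) := by exact_mod_cast hs1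
  have hk0 : (0:ℝ) < (k:ℝ) := by
    have : (0:ℝ) < 7 * s * L / LL := by positivity
    linarith
  have hkLL : 7 * (s:ℝ) * L ≤ (k:ℝ) * LL := by
    rw [div_le_iff₀ hLL0] at hk; linarith
  have hsLLL : (s:ℝ) * (L * LL) ≤ 5 * n := by
    rw [le_div_iff₀ (by positivity : (0:ℝ) < L * LL)] at hs; linarith
  have hpn : p * n ≤ 5 * L := by
    rw [le_div_iff₀ hn0] at hp; linarith
  have e0 : (0:ℝ) ≤ Real.exp 1 := (Real.exp_pos 1).le
  have he1 : Real.exp 1 ≤ 2.8 := by nlinarith [Real.exp_one_lt_d9]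
  set A := (m:ℝ) * p with hAdef
  have hA0 : 0 ≤ A := mul_nonneg (Nat.cast_nonneg m) hp0
  have hAn : A * n ≤ 5 * (s:ℝ)^2 * L := by
    have h1 : (m:ℝ) * (p * n) ≤ (m:ℝ) * (5 * L) :=
      mul_le_mul_of_nonneg_left hpn (Nat.cast_nonneg m)
    have h2 : (m:ℝ) * (5 * L) ≤ (s:ℝ)^2 * (5 * L) :=
      mul_le_mul_of_nonneg_right hm (by linarith)
    nlinarith [h1, h2]
  have hALL : A * LL ≤ 25 * (s:ℝ) := by
    have key : (A * LL) * ((s:ℝ) * L) ≤ (25 * (s:ℝ)) * ((s:ℝ) * L) := by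
      nlinarith [mul_le_mul_of_nonneg_left hsLLL hA0, hAn]
    exact le_of_mul_le_mul_right key (by nlinarith)
  have hbase : A * Real.exp 1 / k ≤ 10 / L := by
    rw [div_le_div_iff₀ hk0 (by linarith : (0:ℝ) < L)]
    have t1 : (A * LL) * (Real.exp 1 * L) ≤ (25 * (s:ℝ)) * (Real.exp 1 * L) :=
      mul_le_mul_of_nonneg_right hALL (mul_nonneg e0 hL0)
    have t2 : (25 * (s:ℝ)) * (Real.exp 1 * L) ≤ (25 * (s:ℝ)) * (2.8 * L) := by
      refine mul_le_mul_of_nonneg_left ?_ (by positivity)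
      exact mul_le_mul_of_nonneg_right he1 hL0
    have h4 : (A * Real.exp 1 * L) * LL ≤ (10 * (k:ℝ)) * LL := by nlinarith [t1, t2, hkLL]
    exact le_of_mul_le_mul_right h4 hLL0
  have hfact : (0:ℝ) < (Nat.factorial k : ℝ) := by exact_mod_cast k.factorial_pos
  have hc1 : (m.choose k : ℝ) ≤ (m:ℝ)^k / (Nat.factorial k : ℝ) := Nat.choose_le_pow_div k m
  have hkk : ((k:ℝ))^k ≤ Real.exp 1 ^ k * (Nat.factorial k : ℝ) := by
    have h := Real.pow_div_factorial_le_exp (x := (k:ℝ)) (Nat.cast_nonneg k) k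
    rw [div_le_iff₀ hfact] at h
    have h2 : Real.exp (k:ℝ) = Real.exp 1 ^ k := by rw [← Real.exp_nat_mul, mul_one]
    rw [h2] at h
    exact h
  have hmain : (m.choose k : ℝ) * p ^ k ≤ (A * Real.exp 1 / k) ^ k := by
    have hpk : (0:ℝ) ≤ p ^ k := pow_nonneg hp0 k
    have hApow : A ^ k = (m:ℝ)^k * p^k := mul_pow _ _ _
    have b1 : (m.choose k : ℝ) * p ^ k ≤ A ^ k / (Nat.factorial k : ℝ) := by
      rw [hApow, ← div_mul_eq_mul_div]
      exact mul_le_mul_of_nonneg_right hc1 hpk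
    have b2 : A ^ k / (Nat.factorial k : ℝ) ≤ (A * Real.exp 1 / k) ^ k := by
      rw [div_pow, mul_pow, div_le_div_iff₀ hfact (pow_pos hk0 k)]
      have h8 : (0:ℝ) ≤ (m:ℝ)^k * p^k := mul_nonneg (pow_nonneg (Nat.cast_nonneg m) k) hpk
      have h9 := mul_le_mul_of_nonneg_left hkk h8
      rw [mul_pow A (Real.exp 1) k, hApow]
      nlinarith [h9]
    linarith [b1, b2]
  have hbase' : (A * Real.exp 1 / k) ^ k ≤ (10 / L) ^ k :=
    pow_le_pow_left₀ (by positivity) hbase k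
  have hlog10 : Real.log 10 ≤ 3 := by
    rw [Real.log_le_iff_le_exp (by norm_num : (0:ℝ) < 10)]
    have h3 : Real.exp 3 = Real.exp 1 ^ 3 := by
      rw [show (3:ℝ) = ((3:ℕ):ℝ) * 1 by norm_num, Real.exp_nat_mul]
    rw [h3]
    have hb : (2.7182818283:ℝ)^3 ≤ Real.exp 1 ^ 3 :=
      pow_le_pow_left₀ (by norm_num) Real.exp_one_gt_d9.le 3
    nlinarith [hb]
  have hkey : (3 * (s:ℝ) + 2) * L ≤ (k:ℝ) * (LL - Real.log 10) := by
    have h5 : (k:ℝ) * Real.log 10 ≤ 3 * (k:ℝ) := by nlinarith [hlog10, hk0.le]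
    have h6 : 21 * (k:ℝ) ≤ (k:ℝ) * LL := by nlinarith [hk0.le, hLL21]
    nlinarith [hkLL, h5, h6, mul_nonneg (sub_nonneg.mpr hs1') hL0, hL0]
  have hfinal : (10 / L) ^ k ≤ ((n:ℝ)⁻¹)^2 * (((n:ℝ)⁻¹)^3)^s := by
    have hLpos : (0:ℝ) < L := by linarith
    have h10L : (10:ℝ) / L = Real.exp (Real.log 10 - LL) := by
      rw [Real.exp_sub, Real.exp_log (by norm_num : (0:ℝ) < 10), hLLdef, Real.exp_log hLpos]
    rw [h10L, ← Real.exp_nat_mul]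
    have hpow : ((n:ℝ)⁻¹)^2 * (((n:ℝ)⁻¹)^3)^s = Real.exp (-((3 * (s:ℝ) + 2) * L)) := by
      have hninv : (n:ℝ)⁻¹ = Real.exp (-L) := by rw [Real.exp_neg, hexp]
      rw [hninv, ← pow_mul, ← pow_add, ← Real.exp_nat_mul]
      congr 1
      push_cast
      ring
    rw [hpow]
    exact Real.exp_le_exp.mpr (by nlinarith [hkey])
  linarith [hmain, hbase', hfinal]

lemma erP_le_one (hp0 : 0 ≤ p) (hp1 : p ≤ 1) (A : SimpleGraph (Fin n) → Prop) :
    erP n p A ≤ 1 := by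
  rw [← sum_erWeight (n := n) hp0 hp1]
  refine Finset.sum_le_sum fun ω _ => ?_
  have h := erWeight_nonneg hp0 hp1 ω
  split_ifs <;> simp <;> linarith

lemma erP_bad_S (hp0 : 0 ≤ p) (hp1 : p ≤ 1)
    (hLL21 : 21 ≤ Real.log (Real.log n))
    (hplog : p ≤ 5 * Real.log n / n)
    (S : Finset (Fin n)) :
    erP n p (fun G => ((S.card : ℝ) ≤ 5 * n / (Real.log n * Real.log (Real.log n)) ∧
        7 * S.card * Real.log n / Real.log (Real.log n) < (edgesIn G S : ℝ)))
      ≤ ((n:ℝ)⁻¹)^2 * (((n:ℝ)⁻¹)^3)^S.card := by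
  have hL0 : 0 ≤ Real.log n := Real.log_natCast_nonneg n
  have hLL0 : (0:ℝ) < Real.log (Real.log n) := by
    by_contra h
    push_neg at h
    have h1 : Real.log n ≤ 1 := by
      by_contra h2
      push_neg at h2
      have := Real.log_pos h2
      linarith
    have := Real.log_nonpos hL0 h1
    linarith
  have hRHS : (0:ℝ) ≤ ((n:ℝ)⁻¹)^2 * (((n:ℝ)⁻¹)^3)^S.card := by positivity
  by_cases hs0 : S.card = 0
  · rw [erP_of_false hp0 hp1]
    · exact hRHS
    · rintro G ⟨-, hlt⟩
      rw [Finset.card_eq_zero.mp hs0, edgesIn_empty] at hlt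
      norm_num [Finset.card_empty] at hlt
  by_cases hsM : (S.card : ℝ) ≤ 5 * n / (Real.log n * Real.log (Real.log n))
  swap
  · rw [erP_of_false hp0 hp1]
    · exact hRHS
    · rintro G ⟨hc, -⟩
      exact hsM hc
  have hs1 : 1 ≤ S.card := Nat.one_le_iff_ne_zero.mpr hs0
  set α : ℝ := 7 * S.card * Real.log n / Real.log (Real.log n) with hα
  have hα0 : 0 ≤ α := by positivity
  set k : ℕ := Nat.floor α + 1 with hkdef
  have hαk : α ≤ (k:ℝ) := by
    push_cast [hkdef]
    exact (Nat.lt_floor_add_one α).le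
  have step1 : erP n p (fun G => ((S.card : ℝ) ≤ 5 * n / (Real.log n * Real.log (Real.log n)) ∧
        α < (edgesIn G S : ℝ)))
      ≤ erP n p (fun G => ∃ T ∈ (pairs n S).powersetCard k, ∀ e ∈ T, e ∈ G.edgeSet) := by
    refine erP_mono hp0 hp1 fun G hG => ?_
    have hlt : Nat.floor α < edgesIn G S := by
      rw [Nat.floor_lt hα0]
      exact_mod_cast hG.2
    exact exists_subset_of_le_edgesIn hlt
  have step2 : erP n p (fun G => ∃ T ∈ (pairs n S).powersetCard k, ∀ e ∈ T, e ∈ G.edgeSet)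
      ≤ ((pairs n S).card.choose k : ℝ) * p ^ k := by
    calc erP n p (fun G => ∃ T ∈ (pairs n S).powersetCard k, ∀ e ∈ T, e ∈ G.edgeSet)
        ≤ ∑ T ∈ (pairs n S).powersetCard k,
            erP n p (fun G => ∀ e ∈ T, e ∈ G.edgeSet) :=
          erP_union_bound hp0 hp1 _ _
      _ ≤ ∑ T ∈ (pairs n S).powersetCard k, p ^ k := by
          refine Finset.sum_le_sum fun T hT => ?_
          obtain ⟨hTsub, hTcard⟩ := Finset.mem_powersetCard.mp hT
          have := erP_all_edges hp0 hp1 T (fun e he => pairs_not_isDiag (hTsub he))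
          rwa [hTcard] at this
      _ = ((pairs n S).card.choose k : ℝ) * p ^ k := by
          rw [Finset.sum_const, Finset.card_powersetCard, nsmul_eq_mul]
  have step3 : ((pairs n S).card.choose k : ℝ) * p ^ k
      ≤ ((n:ℝ)⁻¹)^2 * (((n:ℝ)⁻¹)^3)^S.card := by
    refine calc_bound n S.card (pairs n S).card k p hp0 hLL21 hplog hs1 hsM ?_ ?_
    · exact_mod_cast (card_pairs_le S).trans_eq (by push_cast; ring_nf)
    · exact hαk
  exact (step1.trans step2).trans step3

lemma erP_good (hp0 : 0 ≤ p) (hp1 : p ≤ 1) (hn1 : 1 ≤ n)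
    (hLL21 : 21 ≤ Real.log (Real.log n))
    (hplog : p ≤ 5 * Real.log n / n) :
    1 - 3 / (n:ℝ)^2 ≤ erP n p (fun G => ∀ S : Finset (Fin n),
        (S.card : ℝ) ≤ 5 * n / (Real.log n * Real.log (Real.log n)) →
        (edgesIn G S : ℝ) ≤ 7 * S.card * Real.log n / Real.log (Real.log n)) := by
  set Good : SimpleGraph (Fin n) → Prop := fun G => ∀ S : Finset (Fin n),
      (S.card : ℝ) ≤ 5 * n / (Real.log n * Real.log (Real.log n)) →
      (edgesIn G S : ℝ) ≤ 7 * S.card * Real.log n / Real.log (Real.log n) with hGood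
  have hn0 : (0:ℝ) < n := by exact_mod_cast hn1
  have hbad : erP n p (fun G => ¬ Good G) ≤ 3 / (n:ℝ)^2 := by
    have m1 : erP n p (fun G => ¬ Good G)
        ≤ erP n p (fun G => ∃ S ∈ (Finset.univ : Finset (Finset (Fin n))),
            ((S.card : ℝ) ≤ 5 * n / (Real.log n * Real.log (Real.log n)) ∧
              7 * S.card * Real.log n / Real.log (Real.log n) < (edgesIn G S : ℝ))) := by
      refine erP_mono hp0 hp1 fun G hG => ?_
      simp only [hGood, not_forall, Classical.not_imp, not_le] at hG
      obtain ⟨S, h1, h2⟩ := hG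
      exact ⟨S, Finset.mem_univ S, h1, h2⟩
    have m2 : erP n p (fun G => ∃ S ∈ (Finset.univ : Finset (Finset (Fin n))),
            ((S.card : ℝ) ≤ 5 * n / (Real.log n * Real.log (Real.log n)) ∧
              7 * S.card * Real.log n / Real.log (Real.log n) < (edgesIn G S : ℝ)))
        ≤ ∑ S : Finset (Fin n), ((n:ℝ)⁻¹)^2 * (((n:ℝ)⁻¹)^3)^S.card := by
      refine (erP_union_bound hp0 hp1 _ _).trans ?_
      exact Finset.sum_le_sum fun S _ => erP_bad_S hp0 hp1 hLL21 hplog S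
    have m3 : ∑ S : Finset (Fin n), ((n:ℝ)⁻¹)^2 * (((n:ℝ)⁻¹)^3)^S.card
        ≤ 3 / (n:ℝ)^2 := by
      rw [← Finset.mul_sum]
      have hsum : ∑ S : Finset (Fin n), (((n:ℝ)⁻¹)^3)^S.card
          = (((n:ℝ)⁻¹)^3 + 1)^n := by
        have := Fintype.prod_add (fun _ : Fin n => ((n:ℝ)⁻¹)^3) (fun _ : Fin n => (1:ℝ))
        simp only [Finset.prod_const, one_pow, mul_one, Finset.card_univ,
          Fintype.card_fin] at this
        exact this.symm
      rw [hsum]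
      have hexp1 : (((n:ℝ)⁻¹)^3 + 1)^n ≤ 3 := by
        have h1 : ((n:ℝ)⁻¹)^3 + 1 ≤ Real.exp (((n:ℝ)⁻¹)^3) := by
          have := Real.add_one_le_exp (((n:ℝ)⁻¹)^3)
          linarith
        have h2 : (((n:ℝ)⁻¹)^3 + 1)^n ≤ Real.exp (((n:ℝ)⁻¹)^3) ^ n :=
          pow_le_pow_left₀ (by positivity) h1 n
        have h3 : Real.exp (((n:ℝ)⁻¹)^3) ^ n = Real.exp ((n:ℝ) * ((n:ℝ)⁻¹)^3) := by
          rw [Real.exp_nat_mul]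
        have h4 : (n:ℝ) * ((n:ℝ)⁻¹)^3 ≤ 1 := by
          rw [show ((n:ℝ)⁻¹)^3 = (n:ℝ)⁻¹ * ((n:ℝ)⁻¹)^2 by ring]
          have hinv1 : (n:ℝ)⁻¹ ≤ 1 := by
            rw [inv_le_one_iff₀]
            right
            exact_mod_cast hn1
          have : (n:ℝ) * ((n:ℝ)⁻¹ * ((n:ℝ)⁻¹)^2) = ((n:ℝ)⁻¹)^2 := by
            field_simp
          rw [this]
          calc ((n:ℝ)⁻¹)^2 ≤ 1^2 := pow_le_pow_left₀ (by positivity) hinv1 2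
            _ = 1 := one_pow 2
        have h5 : Real.exp ((n:ℝ) * ((n:ℝ)⁻¹)^3) ≤ Real.exp 1 :=
          Real.exp_le_exp.mpr h4
        have h6 : Real.exp 1 ≤ 3 := by nlinarith [Real.exp_one_lt_d9]
        linarith
      calc ((n:ℝ)⁻¹)^2 * (((n:ℝ)⁻¹)^3 + 1)^n ≤ ((n:ℝ)⁻¹)^2 * 3 :=
            mul_le_mul_of_nonneg_left hexp1 (by positivity)
        _ = 3 / (n:ℝ)^2 := by rw [inv_pow]; ring
    linarith [m1, m2, m3]
  have := erP_add_compl hp0 hp1 Good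
  linarith [hbad]

end ErAux

/-- In `G(n,p)` with `p ≤ 5 log n / n`, w.h.p. every vertex subset `S` with
`|S| ≤ 5n/(log n · log log n)` induces at most `7 |S| log n / log log n` edges. -/


theorem stmt_6 (p : ℕ → ℝ) (hp0 : ∀ n, 0 ≤ p n)
    (hp : ∀ᶠ n : ℕ in atTop, p n ≤ 5 * Real.log n / n) :
    Tendsto (fun n => erP n (p n) (fun G =>
        ∀ S : Finset (Fin n),
          (S.card : ℝ) ≤ 5 * n / (Real.log n * Real.log (Real.log n)) →
          (edgesIn G S : ℝ) ≤ 7 * S.card * Real.log n / Real.log (Real.log n)))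
      atTop (𝓝 1) := by
  have hLLt : Tendsto (fun n : ℕ => Real.log (Real.log n)) atTop atTop :=
    (Real.tendsto_log_atTop.comp Real.tendsto_log_atTop).comp
      tendsto_natCast_atTop_atTop
  have hLL : ∀ᶠ n : ℕ in atTop, 21 ≤ Real.log (Real.log n) :=
    hLLt.eventually_ge_atTop 21
  have hn1 : ∀ᶠ n : ℕ in atTop, 1 ≤ n := eventually_ge_atTop 1
  have hlogdiv : Tendsto (fun n : ℕ => Real.log n / n) atTop (𝓝 0) :=
    Real.isLittleO_log_id_atTop.tendsto_div_nhds_zero.comp tendsto_natCast_atTop_atTop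
  have hp1 : ∀ᶠ n : ℕ in atTop, p n ≤ 1 := by
    filter_upwards [hp, hlogdiv.eventually (gt_mem_nhds (by norm_num : (0:ℝ) < 1/5))]
      with n h1 h2
    have : 5 * Real.log n / n = 5 * (Real.log n / n) := by ring
    calc p n ≤ 5 * Real.log n / n := h1
      _ = 5 * (Real.log n / n) := this
      _ ≤ 5 * (1/5) := by
          have := h2.le
          nlinarith [this]
      _ = 1 := by norm_num
  have hlow : ∀ᶠ n : ℕ in atTop, 1 - 3 / (n:ℝ)^2 ≤ erP n (p n) (fun G =>
        ∀ S : Finset (Fin n),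
          (S.card : ℝ) ≤ 5 * n / (Real.log n * Real.log (Real.log n)) →
          (edgesIn G S : ℝ) ≤ 7 * S.card * Real.log n / Real.log (Real.log n)) := by
    filter_upwards [hp, hp1, hLL, hn1] with n h1 h2 h3 h4
    exact ErAux.erP_good (hp0 n) h2 h4 h3 h1
  have hupp : ∀ᶠ n : ℕ in atTop, erP n (p n) (fun G =>
        ∀ S : Finset (Fin n),
          (S.card : ℝ) ≤ 5 * n / (Real.log n * Real.log (Real.log n)) →
          (edgesIn G S : ℝ) ≤ 7 * S.card * Real.log n / Real.log (Real.log n)) ≤ 1 := by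
    filter_upwards [hp1] with n h2
    exact ErAux.erP_le_one (hp0 n) h2 _
  have hlowt : Tendsto (fun n : ℕ => 1 - 3 / (n:ℝ)^2) atTop (𝓝 1) := by
    have hsq : Tendsto (fun n : ℕ => (n:ℝ)^2) atTop atTop :=
      (tendsto_pow_atTop two_ne_zero).comp tendsto_natCast_atTop_atTop
    have h0 : Tendsto (fun n : ℕ => 3 / (n:ℝ)^2) atTop (𝓝 0) :=
      tendsto_const_nhds.div_atTop hsq
    have h1 : Tendsto (fun n : ℕ => (1:ℝ) - 3 / (n:ℝ)^2) atTop (𝓝 (1 - 0)) :=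
      Tendsto.sub tendsto_const_nhds h0
    simpa using h1
  exact tendsto_of_tendsto_of_tendsto_of_le_of_le' hlowt tendsto_const_nhds hlow hupp
end

section
/- Let p₁ ~ (log n)/(2n). The expected number of vertices of G(n,p₁) with degree at most (log n)/40 is at most n^{3/5} for large n, and hence with high probability the number of such vertices is at most n^{2/3}. -/
open Filter Topology

attribute [local instance] Classical.propDecidable

/-- Expectation of `f` over `G(n,p)`. -/
noncomputable def erE (n : ℕ) (p : ℝ) (f : SimpleGraph (Fin n) → ℝ) : ℝ :=
  ∑ ω : Sym2 (Fin n) → Bool, erWeight n p ω * f (graphOf ω)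

/-- The number of vertices of `G` of degree at most `log n / 40`. -/
noncomputable def countLow (n : ℕ) (G : SimpleGraph (Fin n)) : ℕ :=
  (Finset.univ.filter (fun v : Fin n =>
    ((Finset.univ.filter (fun w => G.Adj v w)).card : ℝ) ≤ Real.log n / 40)).card

namespace StmtSeven

open Finset

variable {n : ℕ} {p : ℝ}

lemma sum_prod_bool (g : Sym2 (Fin n) → Bool → ℝ) :
    ∑ ω : Sym2 (Fin n) → Bool, ∏ e, g e (ω e) = ∏ e, (g e false + g e true) := by
  rw [← Fintype.piFinset_univ, ← Finset.prod_univ_sum]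
  simp [Fintype.sum_bool, add_comm]

lemma erWeight_nonneg (h0 : 0 ≤ p) (h1 : p ≤ 1) (ω : Sym2 (Fin n) → Bool) :
    0 ≤ erWeight n p ω := by
  refine Finset.prod_nonneg fun e _ => ?_
  split_ifs <;> linarith

lemma sum_erWeight : ∑ ω : Sym2 (Fin n) → Bool, erWeight n p ω = 1 := by
  have h := sum_prod_bool (n := n) (fun e b =>
    if e.IsDiag then (if b then 0 else 1) else (if b then p else 1 - p))
  simp only [erWeight]
  rw [h]
  refine Finset.prod_eq_one fun e _ => ?_
  by_cases hd : e.IsDiag <;> simp [hd]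

lemma adj_graphOf (ω : Sym2 (Fin n) → Bool) (v w : Fin n) (h : w ≠ v) :
    (graphOf ω).Adj v w ↔ ω s(v, w) = true := by
  rw [graphOf, SimpleGraph.fromRel_adj]
  simp [Sym2.eq_swap, h.symm, Ne.symm h]

lemma erE_mgf (v : Fin n) (r : ℝ) :
    erE n p (fun G => ∏ w ∈ univ.erase v, (if G.Adj v w then r else 1))
      = (1 - p + p * r) ^ (n - 1) := by
  classical
  set S : Finset (Sym2 (Fin n)) := (univ.erase v).image (fun w => s(v, w)) with hS
  have hinj : Set.InjOn (fun w => s(v, w)) (univ.erase v) := by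
    intro a _ b _ hab
    simpa using Sym2.congr_right.mp hab
  have hcard : S.card = n - 1 := by
    rw [hS, Finset.card_image_of_injOn hinj, Finset.card_erase_of_mem (mem_univ v),
      Finset.card_univ, Fintype.card_fin]
  have hSdiag : ∀ e ∈ S, ¬ e.IsDiag := by
    intro e he
    rcases Finset.mem_image.mp he with ⟨w, hw, rfl⟩
    have hwv : w ≠ v := Finset.ne_of_mem_erase hw
    simp [Sym2.mk_isDiag_iff, Ne.symm hwv]
  set g : Sym2 (Fin n) → Bool → ℝ := fun e b =>
    (if e.IsDiag then (if b then (0:ℝ) else 1) else (if b then p else 1 - p)) *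
      (if e ∈ S then (if b then r else 1) else 1) with hg
  have key : ∀ ω : Sym2 (Fin n) → Bool,
      erWeight n p ω * (∏ w ∈ univ.erase v, (if (graphOf ω).Adj v w then r else 1))
        = ∏ e : Sym2 (Fin n), g e (ω e) := by
    intro ω
    simp only [hg]
    rw [Finset.prod_mul_distrib]
    congr 1
    have h1 : ∏ w ∈ univ.erase v, (if (graphOf ω).Adj v w then r else 1)
        = ∏ e ∈ S, (if ω e then r else 1) := by
      rw [hS, Finset.prod_image hinj]
      refine Finset.prod_congr rfl fun w hw => ?_
      by_cases h : (graphOf ω).Adj v w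
      · rw [if_pos h, if_pos ((adj_graphOf ω v w (Finset.ne_of_mem_erase hw)).mp h)]
      · rw [if_neg h, if_neg (fun hc => h ((adj_graphOf ω v w (Finset.ne_of_mem_erase hw)).mpr hc))]
    rw [h1, show (S : Finset (Sym2 (Fin n))) = univ ∩ S by simp, ← Finset.prod_ite_mem]
    simp
  unfold erE
  simp only [key]
  rw [sum_prod_bool g]
  have hprod : ∀ e : Sym2 (Fin n), g e false + g e true = if e ∈ S then (1 - p + p * r) else 1 := by
    intro e
    by_cases heS : e ∈ S
    · have := hSdiag e heS
      simp [hg, heS, this]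
    · by_cases hd : e.IsDiag <;> simp [hg, heS, hd]
  calc ∏ e : Sym2 (Fin n), (g e false + g e true)
      = ∏ e : Sym2 (Fin n), (if e ∈ S then (1 - p + p * r) else 1) :=
        Finset.prod_congr rfl fun e _ => hprod e
    _ = (1 - p + p * r) ^ (n - 1) := by
        rw [Finset.prod_ite_mem, Finset.univ_inter, Finset.prod_const, hcard]

lemma degree_prod (G : SimpleGraph (Fin n)) (v : Fin n) (r : ℝ) :
    ∏ w ∈ univ.erase v, (if G.Adj v w then r else 1)
      = r ^ (univ.filter (fun w => G.Adj v w)).card := by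
  classical
  rw [← Finset.prod_filter, Finset.filter_erase,
    Finset.erase_eq_of_notMem (by simp), Finset.prod_const]

lemma countLow_le (G : SimpleGraph (Fin n)) :
    (countLow n G : ℝ) ≤ ∑ v : Fin n, Real.exp (3 * (Real.log n / 40)) *
      ∏ w ∈ univ.erase v, (if G.Adj v w then Real.exp (-3) else 1) := by
  rw [countLow, Finset.card_filter]
  push_cast
  refine Finset.sum_le_sum fun v _ => ?_
  rw [degree_prod]
  set d := (univ.filter (fun w => G.Adj v w)).card with hd
  have hpow : Real.exp (-3) ^ d = Real.exp ((-3) * d) := by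
    rw [mul_comm, Real.exp_nat_mul]
  by_cases h : (d:ℝ) ≤ Real.log n / 40
  · rw [if_pos h, hpow, ← Real.exp_add]
    have : (0:ℝ) ≤ 3 * (Real.log n / 40) + (-3) * d := by linarith
    calc (1:ℝ) = Real.exp 0 := by rw [Real.exp_zero]
      _ ≤ Real.exp (3 * (Real.log n / 40) + (-3) * d) := Real.exp_le_exp.mpr this
  · rw [if_neg h]
    positivity

lemma erE_mono (h0 : 0 ≤ p) (h1 : p ≤ 1) {f g : SimpleGraph (Fin n) → ℝ}
    (h : ∀ G, f G ≤ g G) : erE n p f ≤ erE n p g :=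
  Finset.sum_le_sum fun ω _ => mul_le_mul_of_nonneg_left (h _) (erWeight_nonneg h0 h1 ω)

lemma erE_sum {ι : Type*} (s : Finset ι) (f : ι → SimpleGraph (Fin n) → ℝ) :
    erE n p (fun G => ∑ i ∈ s, f i G) = ∑ i ∈ s, erE n p (f i) := by
  unfold erE
  simp_rw [Finset.mul_sum]
  rw [Finset.sum_comm]

lemma erE_const_mul (a : ℝ) (f : SimpleGraph (Fin n) → ℝ) :
    erE n p (fun G => a * f G) = a * erE n p f := by
  unfold erE
  rw [Finset.mul_sum]
  exact Finset.sum_congr rfl fun ω _ => by ring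

lemma erE_countLow_le (h0 : 0 ≤ p) (h1 : p ≤ 1) :
    erE n p (fun G => (countLow n G : ℝ))
      ≤ n * (Real.exp (3 * (Real.log n / 40)) * (1 - p + p * Real.exp (-3)) ^ (n - 1)) := by
  refine le_trans (erE_mono h0 h1 countLow_le) ?_
  rw [erE_sum]
  have hterm : ∀ v : Fin n, erE n p (fun G => Real.exp (3 * (Real.log n / 40)) *
      ∏ w ∈ univ.erase v, (if G.Adj v w then Real.exp (-3) else 1))
      = Real.exp (3 * (Real.log n / 40)) * (1 - p + p * Real.exp (-3)) ^ (n - 1) := fun v => by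
    rw [erE_const_mul, erE_mgf]
  rw [Finset.sum_congr rfl (fun v _ => hterm v), Finset.sum_const, Finset.card_univ,
    Fintype.card_fin, nsmul_eq_mul]

set_option maxHeartbeats 1000000 in
lemma numeric_bound {m : ℕ} (hn : 1000000 ≤ m) {η : ℝ} (hη : |η| ≤ 1/10000) {q : ℝ}
    (hq : q = (1 + η) * Real.log m / (2 * m)) :
    (m:ℝ) * (Real.exp (3 * (Real.log m / 40)) * (1 - q + q * Real.exp (-3)) ^ (m - 1))
      ≤ (m:ℝ) ^ ((3:ℝ)/5) := by
  have hn1 : (1000000:ℝ) ≤ m := by exact_mod_cast hn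
  have hnpos : (0:ℝ) < m := by linarith
  have hL : 0 < Real.log m := Real.log_pos (by linarith)
  have hLn : Real.log m ≤ (m:ℝ) - 1 := Real.log_le_sub_one_of_pos hnpos
  have hηlo : -(1/10000) ≤ η := neg_le_of_abs_le hη
  have hηhi : η ≤ 1/10000 := le_of_abs_le hη
  have hexp3 : Real.exp (-3) ≤ 0.0498 := by
    have h1 : (2.7182818283:ℝ) < Real.exp 1 := Real.exp_one_gt_d9
    have h2 : Real.exp 3 = Real.exp 1 ^ (3:ℕ) := by
      rw [← Real.exp_nat_mul]; norm_num
    have h3 : (20.085:ℝ) ≤ Real.exp 3 := by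
      rw [h2]
      have hb : (20.085:ℝ) ≤ (2.7182818283:ℝ)^(3:ℕ) := by norm_num
      have hb2 : (2.7182818283:ℝ)^(3:ℕ) ≤ Real.exp 1 ^ (3:ℕ) :=
        pow_le_pow_left₀ (by norm_num) h1.le 3
      linarith
    rw [Real.exp_neg]
    rw [inv_le_comm₀ (Real.exp_pos 3) (by norm_num)]
    calc (0.0498:ℝ)⁻¹ ≤ 20.085 := by norm_num
      _ ≤ Real.exp 3 := h3
  have hexp3' : 0 < Real.exp (-3) := Real.exp_pos _
  set c : ℝ := 1 - Real.exp (-3) with hc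
  have hc1 : c ≤ 1 := by simp only [hc]; linarith
  have hc0 : 0.9502 ≤ c := by simp only [hc]; linarith
  have hq0 : 0 ≤ q := by
    rw [hq]
    apply div_nonneg _ (by linarith)
    nlinarith
  have hq1 : q ≤ 1 := by
    rw [hq, div_le_one (by linarith)]
    nlinarith
  have hform : 1 - q + q * Real.exp (-3) = 1 - c * q := by rw [hc]; ring
  have hcq1 : 0 ≤ 1 - c * q := by nlinarith
  have hcq2 : 1 - c * q ≤ Real.exp (-(c * q)) := by
    have := Real.add_one_le_exp (-(c * q)); linarith
  have hpow : (1 - c * q) ^ (m - 1) ≤ Real.exp (-(c * q)) ^ (m - 1) :=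
    pow_le_pow_left₀ hcq1 hcq2 _
  have hcast : ((m - 1 : ℕ):ℝ) = (m:ℝ) - 1 := by
    rw [Nat.cast_sub (le_trans (by norm_num) hn)]; norm_num
  have hexppow : Real.exp (-(c * q)) ^ (m - 1) = Real.exp (((m:ℝ) - 1) * (-(c * q))) := by
    rw [← Real.exp_nat_mul, hcast]
  have hcη : -(1/10000) ≤ c * η := by
    nlinarith [mul_nonneg (sub_nonneg.mpr hc1) (by linarith : (0:ℝ) ≤ η + 1/10000)]
  have hX : (0.9501:ℝ) ≤ c * (1 + η) := by nlinarith
  have hA : (19/20) * (m:ℝ) ≤ (c * (1 + η)) * ((m:ℝ) - 1) := by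
    have := mul_le_mul_of_nonneg_right hX (by linarith : (0:ℝ) ≤ (m:ℝ) - 1)
    nlinarith
  have hL2n : (0:ℝ) ≤ Real.log m / (2 * m) := by positivity
  have e1 : (19/20) * (m:ℝ) * (Real.log m / (2 * m)) = (19/40) * Real.log m := by
    field_simp; ring
  have e2 : (c * (1 + η)) * ((m:ℝ) - 1) * (Real.log m / (2 * m))
      = ((m:ℝ) - 1) * (c * ((1 + η) * Real.log m / (2 * m))) := by ring
  have key : (19/40) * Real.log m ≤ ((m:ℝ) - 1) * (c * ((1 + η) * Real.log m / (2 * m))) := by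
    have := mul_le_mul_of_nonneg_right hA hL2n
    rw [e1, e2] at this
    exact this
  have hmain : Real.log m + (3 * (Real.log m / 40) + ((m:ℝ) - 1) * (-(c * q)))
      ≤ (3/5) * Real.log m := by
    rw [hq]
    have expand : ((m:ℝ) - 1) * (-(c * ((1 + η) * Real.log m / (2 * m))))
        = -(((m:ℝ) - 1) * (c * ((1 + η) * Real.log m / (2 * m)))) := by ring
    rw [expand]
    linarith
  calc (m:ℝ) * (Real.exp (3 * (Real.log m / 40)) * (1 - q + q * Real.exp (-3)) ^ (m - 1))
      ≤ (m:ℝ) * (Real.exp (3 * (Real.log m / 40)) * Real.exp (((m:ℝ) - 1) * (-(c * q)))) := by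
        rw [hform]
        have := hpow
        rw [hexppow] at this
        have h2 : (0:ℝ) ≤ Real.exp (3 * (Real.log m / 40)) := (Real.exp_pos _).le
        exact mul_le_mul_of_nonneg_left (mul_le_mul_of_nonneg_left this h2) hnpos.le
    _ = Real.exp (Real.log m + (3 * (Real.log m / 40) + ((m:ℝ) - 1) * (-(c * q)))) := by
        rw [Real.exp_add, Real.exp_add, Real.exp_log hnpos]
    _ ≤ Real.exp ((3/5) * Real.log m) := Real.exp_le_exp.mpr hmain
    _ = (m:ℝ) ^ ((3:ℝ)/5) := by
        rw [Real.rpow_def_of_pos hnpos]; ring_nf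

lemma erP_nonneg (h0 : 0 ≤ p) (h1 : p ≤ 1) (A : SimpleGraph (Fin n) → Prop) :
    0 ≤ erP n p A := by
  refine Finset.sum_nonneg fun ω _ => mul_nonneg (erWeight_nonneg h0 h1 ω) ?_
  split_ifs <;> norm_num

lemma erP_le_one (h0 : 0 ≤ p) (h1 : p ≤ 1) (A : SimpleGraph (Fin n) → Prop) :
    erP n p A ≤ 1 := by
  rw [erP]
  calc (∑ ω : Sym2 (Fin n) → Bool, erWeight n p ω * (if A (graphOf ω) then 1 else 0))
      ≤ ∑ ω : Sym2 (Fin n) → Bool, erWeight n p ω := by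
        refine Finset.sum_le_sum fun ω _ => ?_
        have hw := erWeight_nonneg h0 h1 ω
        split_ifs <;> simp <;> linarith
    _ = 1 := sum_erWeight

lemma one_sub_erP_le (h0 : 0 ≤ p) (h1 : p ≤ 1) (t : ℝ) (ht : 0 < t) :
    1 - erP n p (fun G => (countLow n G : ℝ) ≤ t)
      ≤ erE n p (fun G => (countLow n G : ℝ)) / t := by
  have hsplit : 1 - erP n p (fun G => (countLow n G : ℝ) ≤ t)
      = ∑ ω : Sym2 (Fin n) → Bool, erWeight n p ω *
          (1 - if (countLow n (graphOf ω) : ℝ) ≤ t then 1 else 0) := by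
    rw [erP, eq_comm]
    have : ∀ ω : Sym2 (Fin n) → Bool, erWeight n p ω *
          (1 - if (countLow n (graphOf ω) : ℝ) ≤ t then 1 else 0)
        = erWeight n p ω - erWeight n p ω * (if (countLow n (graphOf ω) : ℝ) ≤ t then 1 else 0) :=
      fun ω => by ring
    rw [Finset.sum_congr rfl fun ω _ => this ω, Finset.sum_sub_distrib, sum_erWeight]
  rw [hsplit, erE, Finset.sum_div]
  refine Finset.sum_le_sum fun ω _ => ?_
  have hw := erWeight_nonneg h0 h1 ω
  rw [mul_div_assoc]
  refine mul_le_mul_of_nonneg_left ?_ hw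
  by_cases hA : (countLow n (graphOf ω) : ℝ) ≤ t
  · rw [if_pos hA]
    simp only [sub_self]
    positivity
  · rw [if_neg hA]
    push_neg at hA
    rw [le_div_iff₀ ht]
    linarith

end StmtSeven


open StmtSeven in
/-- For `p₁ ~ log n / (2n)`: the expected number of vertices of `G(n,p₁)` of
degree at most `log n / 40` is at most `n^{3/5}` for large `n`, and w.h.p. the
number of such vertices is at most `n^{2/3}`. -/
theorem stmt_7 (η : ℕ → ℝ) (hη : Tendsto η atTop (𝓝 0)) (p₁ : ℕ → ℝ)
    (hp : ∀ n : ℕ, p₁ n = (1 + η n) * Real.log n / (2 * n)) :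
    (∀ᶠ n : ℕ in atTop,
        erE n (p₁ n) (fun G => (countLow n G : ℝ)) ≤ (n : ℝ) ^ ((3 : ℝ) / 5))
    ∧ Tendsto (fun n => erP n (p₁ n) (fun G =>
          (countLow n G : ℝ) ≤ (n : ℝ) ^ ((2 : ℝ) / 3)))
        atTop (𝓝 1) := by
  have hsmall : ∀ᶠ n : ℕ in atTop, |η n| ≤ 1/10000 := by
    have h := hη.eventually (Metric.ball_mem_nhds (0:ℝ) (by norm_num : (0:ℝ) < 1/10000))
    filter_upwards [h] with n hn
    rw [Real.dist_eq, sub_zero] at hn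
    exact hn.le
  have hbig : ∀ᶠ n : ℕ in atTop, 1000000 ≤ n := Filter.eventually_ge_atTop 1000000
  have hkey : ∀ᶠ n : ℕ in atTop,
      erE n (p₁ n) (fun G => (countLow n G : ℝ)) ≤ (n : ℝ) ^ ((3:ℝ)/5) ∧
      0 ≤ p₁ n ∧ p₁ n ≤ 1 := by
    filter_upwards [hsmall, hbig] with n hs hb
    have hn1 : (1000000:ℝ) ≤ n := by exact_mod_cast hb
    have hnpos : (0:ℝ) < n := by linarith
    have hL : 0 < Real.log n := Real.log_pos (by linarith)
    have hLn : Real.log n ≤ (n:ℝ) - 1 := Real.log_le_sub_one_of_pos hnpos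
    have hηlo : -(1/10000) ≤ η n := neg_le_of_abs_le hs
    have hηhi : η n ≤ 1/10000 := le_of_abs_le hs
    have hp0 : 0 ≤ p₁ n := by
      rw [hp n]
      apply div_nonneg _ (by linarith)
      nlinarith
    have hp1 : p₁ n ≤ 1 := by
      rw [hp n, div_le_one (by linarith)]
      nlinarith
    exact ⟨le_trans (erE_countLow_le hp0 hp1) (numeric_bound hb hs (hp n)), hp0, hp1⟩
  refine ⟨hkey.mono fun n h => h.1, ?_⟩
  have hub : ∀ᶠ n : ℕ in atTop,
      erP n (p₁ n) (fun G => (countLow n G : ℝ) ≤ (n:ℝ)^((2:ℝ)/3)) ≤ 1 :=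
    hkey.mono fun n h => erP_le_one h.2.1 h.2.2 _
  have hlb : ∀ᶠ n : ℕ in atTop,
      1 - (n:ℝ)^((-(1/15)):ℝ) ≤ erP n (p₁ n) (fun G => (countLow n G : ℝ) ≤ (n:ℝ)^((2:ℝ)/3)) := by
    filter_upwards [hkey, hbig] with n h hb
    have hn1 : (1000000:ℝ) ≤ n := by exact_mod_cast hb
    have hnpos : (0:ℝ) < n := by linarith
    have ht : (0:ℝ) < (n:ℝ)^((2:ℝ)/3) := Real.rpow_pos_of_pos hnpos _
    have hm := one_sub_erP_le (n := n) h.2.1 h.2.2 ((n:ℝ)^((2:ℝ)/3)) ht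
    have hdiv : erE n (p₁ n) (fun G => (countLow n G : ℝ)) / (n:ℝ)^((2:ℝ)/3)
        ≤ (n:ℝ)^((-(1/15)):ℝ) := by
      rw [div_le_iff₀ ht]
      calc erE n (p₁ n) (fun G => (countLow n G : ℝ)) ≤ (n:ℝ)^((3:ℝ)/5) := h.1
        _ = (n:ℝ)^((-(1/15)):ℝ) * (n:ℝ)^((2:ℝ)/3) := by
            rw [← Real.rpow_add hnpos]
            norm_num
    linarith
  have hnegtend : Tendsto (fun n : ℕ => (n:ℝ)^((-(1/15)):ℝ)) atTop (𝓝 0) := by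
    have h1 : Tendsto (fun x : ℝ => x ^ ((-(1/15)):ℝ)) atTop (𝓝 0) :=
      tendsto_rpow_neg_atTop (by norm_num)
    exact h1.comp tendsto_natCast_atTop_atTop
  have hgl : Tendsto (fun n : ℕ => 1 - (n:ℝ)^((-(1/15)):ℝ)) atTop (𝓝 1) := by
    simpa using tendsto_const_nhds.sub hnegtend
  exact tendsto_of_tendsto_of_tendsto_of_le_of_le' hgl tendsto_const_nhds hlb hub
end
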